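/- Let p be a prime, m ≥ 0 and λ ≥ m integers, b = p^m, and a ∈ ℤ_p with v_p(a) = λ. The unique y ∈ ℚ_p⟦t⟧ with constant term 0 and y' = a·t^{b-1} is y = (a/b)·t^b, and the p-adic valuation of its coefficient a/b is exactly λ - m. In particular, the loss of precision ⌊log_p n⌋ in the precision bound λ ≥ ⌊log_p n⌋ + κ is attained (taking n = b), so the bound cannot be improved. -/

import Mathlib

open PowerSeries

theorem coeff_derivativeFun' {R : Type*} [CommSemiring R] (f : PowerSeries R) (n : ℕ) :
    coeff n (derivativeFun f) = coeff (n + 1) f * (n + 1) :=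
  coeff_derivative f n

/-- the intrinsic loss of precision `⌊log_p n⌋` is attained.  For `b = p^m`
and `a ∈ ℤ_p` with `v_p(a) = λ ≥ m`, the unique solution with zero constant term of
`y' = a·t^{b-1}` is `(a/b)·t^b`, whose coefficient `a/b` has valuation exactly `λ - m`. -/
theorem stmt15 (p : ℕ) [hp : Fact p.Prime] (m lam : ℕ) (hml : m ≤ lam)
    (a : ℚ_[p]) (ha0 : a ≠ 0) (ha : a.valuation = (lam : ℤ)) :
    (∀ y : PowerSeries ℚ_[p],
      (constantCoeff y = 0 ∧
          derivativeFun y = C a * X ^ (p ^ m - 1)) ↔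
        y = C (a / (p ^ m : ℚ_[p])) * X ^ (p ^ m)) ∧
    (a / (p ^ m : ℚ_[p])).valuation = (lam : ℤ) - (m : ℤ) := by
  have hppos : 0 < p := hp.out.pos
  have hb : 1 ≤ p ^ m := Nat.one_le_pow _ _ hppos
  have hbne : ((p : ℚ_[p]) ^ m) ≠ 0 := by
    have : (p : ℚ_[p]) ≠ 0 := Nat.cast_ne_zero.mpr hppos.ne'
    exact pow_ne_zero _ this
  constructor
  · intro y
    constructor
    · rintro ⟨h0, hd⟩
      ext n
      rw [coeff_C_mul, coeff_X_pow]
      match n with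
      | 0 =>
        simp only [coeff_zero_eq_constantCoeff, h0]
        rw [if_neg (by omega)]
        simp
      | k + 1 =>
        have hh := congrArg (fun f => coeff k f) hd
        simp only [coeff_derivativeFun', coeff_C_mul, coeff_X_pow] at hh
        have hk1 : ((k : ℚ_[p]) + 1) ≠ 0 := by
          exact_mod_cast (Nat.cast_ne_zero (R := ℚ_[p])).mpr (Nat.succ_ne_zero k)
        by_cases hkb : k + 1 = p ^ m
        · rw [if_pos hkb]
          have hk : k = p ^ m - 1 := by omega
          rw [if_pos hk] at hh
          have hbc : ((k : ℚ_[p]) + 1) = (p : ℚ_[p]) ^ m := by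
            have h2 : ((k + 1 : ℕ) : ℚ_[p]) = ((p ^ m : ℕ) : ℚ_[p]) := by rw [hkb]
            push_cast at h2
            exact_mod_cast h2
          rw [mul_one, hbc] at hh
          rw [mul_one, eq_div_iff hbne]
          exact hh
        · rw [if_neg hkb, mul_zero]
          have hk : k ≠ p ^ m - 1 := by omega
          rw [if_neg hk, mul_zero] at hh
          rcases mul_eq_zero.mp hh with h | h
          · exact h
          · exact absurd h hk1
    · rintro rfl
      refine ⟨?_, ?_⟩
      · rw [← coeff_zero_eq_constantCoeff, coeff_C_mul, coeff_X_pow,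
          if_neg (by omega), mul_zero]
      · ext n
        rw [coeff_derivativeFun', coeff_C_mul, coeff_C_mul, coeff_X_pow, coeff_X_pow]
        by_cases hkb : n + 1 = p ^ m
        · rw [if_pos hkb, if_pos (by omega : n = p ^ m - 1)]
          have hbc : ((n : ℚ_[p]) + 1) = (p : ℚ_[p]) ^ m := by
            have h2 : ((n + 1 : ℕ) : ℚ_[p]) = ((p ^ m : ℕ) : ℚ_[p]) := by rw [hkb]
            push_cast at h2
            exact_mod_cast h2
          rw [hbc]
          field_simp
        · rw [if_neg hkb, if_neg (by omega : ¬ n = p ^ m - 1)]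
          ring
  · have hdne : a / (p : ℚ_[p]) ^ m ≠ 0 := div_ne_zero ha0 hbne
    have hmul := Padic.valuation_mul (p := p) hdne hbne
    rw [div_mul_cancel₀ _ hbne] at hmul
    have hvp : ((p : ℚ_[p]) ^ m).valuation = (m : ℤ) := by
      have : ((p : ℚ_[p]) ^ m) = ((p ^ m : ℕ) : ℚ_[p]) := by push_cast; ring
      rw [this, Padic.valuation_natCast, padicValNat.prime_pow]
    rw [ha, hvp] at hmul
    linarith
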